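/- Let k be a field of characteristic 2, let n be even with n ≥ 2, and let p, q ∈ k be nonzero non-squares. Then Inn_{L_{n/2,p}} is isomorphic to Inn_{L_{n/2,q}} (i.e., there exists C ∈ GL(n,k) with Inn_C ∘ Inn_{L_{n/2,p}} ∘ Inn_C⁻¹ = Inn_{L_{n/2,q}} on SL(n,k)) if and only if p/q is a square in k*, i.e., there exists a nonzero t ∈ k with p = t²·q. -/

import Mathlib

/-- The n×n block-diagonal matrix L_{n/2,p} (for n even): n/2 diagonal 2×2
blocks, each equal to !![0,1;p,0]. -/
def Lhalf {k : Type*} [Field k] (n : ℕ) (p : k) : Matrix (Fin n) (Fin n) k :=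
  Matrix.of fun i j =>
    if (i : ℕ) % 2 = 0 ∧ (j : ℕ) = (i : ℕ) + 1 then 1
    else if (i : ℕ) % 2 = 1 ∧ (j : ℕ) + 1 = (i : ℕ) then p
    else 0

lemma Lhalf_sq {k : Type*} [Field k] {n : ℕ} (hne : Even n) (p : k) :
    Lhalf n p * Lhalf n p = p • (1 : Matrix (Fin n) (Fin n) k) := by
  obtain ⟨m, rfl⟩ := hne
  ext i j
  rw [Matrix.mul_apply]
  simp only [Matrix.smul_apply, Matrix.one_apply, smul_eq_mul]
  have hj := j.isLt
  rcases Nat.even_or_odd (i : ℕ) with hi | hi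
  · have hi2 : (i : ℕ) % 2 = 0 := Nat.even_iff.mp hi
    have hlt : (i : ℕ) + 1 < m + m := by have := i.isLt; omega
    rw [Finset.sum_eq_single (⟨(i:ℕ)+1, hlt⟩ : Fin (m+m))]
    · simp only [Lhalf, Matrix.of_apply, Fin.ext_iff, Fin.val_mk, and_true, true_and]
      split_ifs <;> (first | (exfalso; omega) | ring)
    · intro l _ hl
      have hl' : (l:ℕ) ≠ (i:ℕ)+1 := fun h => hl (Fin.ext h)
      simp only [Lhalf, Matrix.of_apply]
      split_ifs <;> (first | (exfalso; omega) | ring)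
    · intro h; exact absurd (Finset.mem_univ _) h
  · have hi2 : (i : ℕ) % 2 = 1 := Nat.odd_iff.mp hi
    have hlt : (i : ℕ) - 1 < m + m := by have := i.isLt; omega
    rw [Finset.sum_eq_single (⟨(i:ℕ)-1, hlt⟩ : Fin (m+m))]
    · simp only [Lhalf, Matrix.of_apply, Fin.ext_iff, Fin.val_mk, and_true, true_and]
      split_ifs <;> (first | (exfalso; omega) | ring)
    · intro l _ hl
      have hl' : (l:ℕ) ≠ (i:ℕ)-1 := fun h => hl (Fin.ext h)
      simp only [Lhalf, Matrix.of_apply]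
      split_ifs <;> (first | (exfalso; omega) | ring)
    · intro h; exact absurd (Finset.mem_univ _) h

lemma Lhalf_inv {k : Type*} [Field k] {n : ℕ} (hne : Even n) (p : k) (hp0 : p ≠ 0) :
    (Lhalf n p)⁻¹ = p⁻¹ • Lhalf n p := by
  apply Matrix.inv_eq_right_inv
  rw [Matrix.mul_smul, Lhalf_sq hne, smul_smul, inv_mul_cancel₀ hp0, one_smul]

lemma commute_SL_scalar {k : Type*} [Field k] {n : ℕ} (hn : 2 ≤ n)
    (N : Matrix (Fin n) (Fin n) k)
    (h : ∀ X : Matrix (Fin n) (Fin n) k, X.det = 1 → N * X = X * N) :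
    ∃ c : k, N = c • 1 := by
  have key : ∀ i j : Fin n, i ≠ j →
      N * Matrix.single i j 1 = Matrix.single i j 1 * N := by
    intro i j hij
    have h1 := h (Matrix.transvection i j 1) (Matrix.det_transvection_of_ne i j hij 1)
    rw [Matrix.transvection, mul_add, add_mul, mul_one, one_mul] at h1
    exact add_left_cancel h1
  have hdiag : ∀ i j : Fin n, N i i = N j j := by
    intro i j
    by_cases hij : i = j
    · rw [hij]
    · have h2 := congrFun (congrFun (key i j hij) i) j
      simpa using h2
  have hoff : ∀ a b : Fin n, a ≠ b → N a b = 0 := by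
    intro a b hab
    obtain ⟨j, hj⟩ : ∃ j : Fin n, j ≠ b :=
      Fintype.exists_ne_of_one_lt_card (by simpa using by omega) b
    have h2 := congrFun (congrFun (key b j (Ne.symm hj)) a) j
    rw [Matrix.mul_single_apply_same,
      Matrix.single_mul_apply_of_ne (h := hab)] at h2
    simpa using h2
  refine ⟨N ⟨0, by omega⟩ ⟨0, by omega⟩, ?_⟩
  ext i j
  by_cases hij : i = j
  · subst hij
    simp [Matrix.one_apply, hdiag i ⟨0, by omega⟩]
  · simp [Matrix.one_apply, hij, hoff i j hij]

/-- Let k be a field of characteristic 2, n even with n ≥ 2,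
and p, q ∈ k nonzero non-squares. Then Inn_{L_{n/2,p}} is isomorphic to
Inn_{L_{n/2,q}} (∃ C ∈ GL(n,k) with Inn_C ∘ Inn_{L_{n/2,p}} ∘ Inn_C⁻¹ =
Inn_{L_{n/2,q}} on SL(n,k)) iff p/q is a square in k*, i.e. ∃ t ≠ 0 with
p = t²·q. -/
theorem stmt_13 {k : Type*} [Field k] [CharP k 2] {n : ℕ} (hn : 2 ≤ n)
    (hne : Even n) (p q : k) (hp0 : p ≠ 0) (hq0 : q ≠ 0)
    (hp : ¬ ∃ t : k, t ^ 2 = p) (hq : ¬ ∃ t : k, t ^ 2 = q) :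
    (∃ C : (Matrix (Fin n) (Fin n) k)ˣ, ∀ X : Matrix (Fin n) (Fin n) k, X.det = 1 →
        (C : Matrix (Fin n) (Fin n) k) *
          (Lhalf n p *
            ((↑C⁻¹ : Matrix (Fin n) (Fin n) k) * X * (C : Matrix (Fin n) (Fin n) k)) *
            (Lhalf n p)⁻¹) *
          (↑C⁻¹ : Matrix (Fin n) (Fin n) k) =
        Lhalf n q * X * (Lhalf n q)⁻¹) ↔
      ∃ t : k, t ≠ 0 ∧ p = t ^ 2 * q := by
  have hsqq := Lhalf_sq hne q
  constructor
  · rintro ⟨C, hC⟩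
    have hsqp := Lhalf_sq hne p
    set Lp := Lhalf n p with hLp
    set Lq := Lhalf n q with hLq
    set Cv : Matrix (Fin n) (Fin n) k := (↑C : Matrix (Fin n) (Fin n) k) with hCv
    set Ci : Matrix (Fin n) (Fin n) k := (↑C⁻¹ : Matrix (Fin n) (Fin n) k) with hCi
    have hCiC : Ci * Cv = 1 := Units.inv_mul C
    have hCCi : Cv * Ci = 1 := Units.mul_inv C
    set A : Matrix (Fin n) (Fin n) k := Cv * Lp * Ci with hA
    have hA2 : A * A = p • 1 := by
      have e1 : A * A = Cv * (Lp * ((Ci * Cv) * (Lp * Ci))) := by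
        rw [hA]; noncomm_ring
      rw [e1, hCiC, one_mul, ← mul_assoc, ← mul_assoc, mul_assoc Cv Lp Lp,
        show Lp * Lp = p • 1 from hsqp]
      rw [Matrix.mul_smul, Matrix.smul_mul, mul_one, hCCi]
    have hEq : ∀ X : Matrix (Fin n) (Fin n) k, X.det = 1 →
        p⁻¹ • (A * X * A) = q⁻¹ • (Lq * X * Lq) := by
      intro X hX
      have h1 := hC X hX
      rw [Lhalf_inv hne p hp0, Lhalf_inv hne q hq0] at h1
      have e2 : Cv * (Lp * (Ci * X * Cv) * (p⁻¹ • Lp)) * Ci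
          = p⁻¹ • (A * X * A) := by
        rw [hA]
        simp only [Matrix.mul_smul, Matrix.smul_mul]
        congr 1
        noncomm_ring
      have e3 : Lq * X * (q⁻¹ • Lq) = q⁻¹ • (Lq * X * Lq) := by
        rw [Matrix.mul_smul]
      rw [e2, e3] at h1
      exact h1
    set N1 : Matrix (Fin n) (Fin n) k := (q⁻¹ * p⁻¹) • (Lq * A) with hN1
    set N2 : Matrix (Fin n) (Fin n) k := A * Lq with hN2
    have hN12 : N1 * N2 = 1 := by
      rw [hN1, hN2]
      rw [Matrix.smul_mul]
      have e4 : Lq * A * (A * Lq) = Lq * (A * A) * Lq := by noncomm_ring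
      rw [e4, hA2, Matrix.mul_smul, Matrix.smul_mul, mul_one, smul_smul, hsqq, smul_smul]
      rw [show q⁻¹ * p⁻¹ * p * q = 1 by field_simp, one_smul]
    have hXid : ∀ X : Matrix (Fin n) (Fin n) k, X.det = 1 → N1 * X * N2 = X := by
      intro X hX
      have h1 := hEq X hX
      have e5 : N1 * X * N2 = q⁻¹ • (Lq * (p⁻¹ • (A * X * A)) * Lq) := by
        rw [hN1, hN2]
        simp only [Matrix.smul_mul, Matrix.mul_smul, smul_smul]
        congr 1
        noncomm_ring
      rw [e5, h1]
      simp only [Matrix.smul_mul, Matrix.mul_smul, smul_smul]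
      have e6 : Lq * (Lq * X * Lq) * Lq = (Lq * Lq) * X * (Lq * Lq) := by noncomm_ring
      rw [e6, hsqq]
      simp only [Matrix.smul_mul, Matrix.mul_smul, smul_smul, one_mul, mul_one]
      rw [show q⁻¹ * q⁻¹ * (q * q) = 1 by field_simp; try ring, one_smul]
    have hcomm : ∀ X : Matrix (Fin n) (Fin n) k, X.det = 1 → N1 * X = X * N1 := by
      intro X hX
      have h21 : N2 * N1 = 1 := mul_eq_one_comm.mp hN12
      calc N1 * X = N1 * X * (N2 * N1) := by rw [h21, mul_one]
        _ = (N1 * X * N2) * N1 := by noncomm_ring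
        _ = X * N1 := by rw [hXid X hX]
    obtain ⟨c, hc⟩ := commute_SL_scalar hn N1 hcomm
    have hLqA : Lq * A = (c * (q * p)) • 1 := by
      rw [hN1] at hc
      calc Lq * A = (q * p) • ((q⁻¹ * p⁻¹) • (Lq * A)) := by
            rw [smul_smul, show (q * p) * (q⁻¹ * p⁻¹) = 1 by field_simp, one_smul]
        _ = (q * p) • (c • (1 : Matrix (Fin n) (Fin n) k)) := by rw [hc]
        _ = (c * (q * p)) • 1 := by rw [smul_smul]; ring_nf
    have hAeq : A = (c * p) • Lq := by
      calc A = (q⁻¹ • Lq) * (Lq * A) := by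
            rw [Matrix.smul_mul, ← mul_assoc, hsqq, Matrix.smul_mul, one_mul, smul_smul,
              inv_mul_cancel₀ hq0, one_smul]
        _ = (q⁻¹ • Lq) * ((c * (q * p)) • 1) := by rw [hLqA]
        _ = (c * p) • Lq := by
            rw [Matrix.mul_smul, mul_one, smul_smul,
              show c * (q * p) * q⁻¹ = c * p by field_simp]
    have hfin : p • (1 : Matrix (Fin n) (Fin n) k) = ((c * p)^2 * q) • 1 := by
      rw [← hA2, hAeq, Matrix.smul_mul, Matrix.mul_smul, smul_smul, hsqq, smul_smul]
      congr 1
      ring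
    have hp' : p = (c * p)^2 * q := by
      have h9 := congrFun (congrFun hfin ⟨0, by omega⟩) ⟨0, by omega⟩
      simpa [Matrix.one_apply] using h9
    refine ⟨c * p, ?_, hp'⟩
    intro h0
    apply hp0
    rw [h0] at hp'
    simpa using hp'
  · rintro ⟨t, ht0, rfl⟩
    set d : Fin n → k := fun i => if (i:ℕ) % 2 = 0 then t else 1 with hd
    have hdne : ∀ i, d i ≠ 0 := by
      intro i; rw [hd]; dsimp only
      split_ifs
      · exact ht0
      · exact one_ne_zero
    set D := Matrix.diagonal d with hD
    set D' := Matrix.diagonal (fun i => (d i)⁻¹) with hD'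
    have hmul : D * D' = 1 := by
      rw [hD, hD', Matrix.diagonal_mul_diagonal,
        show (fun i => d i * (d i)⁻¹) = fun _ => (1:k) from
          funext fun i => mul_inv_cancel₀ (hdne i), Matrix.diagonal_one]
    have hmul' : D' * D = 1 := by
      rw [hD, hD', Matrix.diagonal_mul_diagonal,
        show (fun i => (d i)⁻¹ * d i) = fun _ => (1:k) from
          funext fun i => inv_mul_cancel₀ (hdne i), Matrix.diagonal_one]
    refine ⟨⟨D, D', hmul, hmul'⟩, ?_⟩
    intro X hX
    have hcoe : ((⟨D, D', hmul, hmul'⟩ : (Matrix (Fin n) (Fin n) k)ˣ)⁻¹ :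
        (Matrix (Fin n) (Fin n) k)ˣ) = ⟨D', D, hmul', hmul⟩ := rfl
    rw [hcoe]
    show D * (Lhalf n (t^2*q) * (D' * X * D) * (Lhalf n (t^2*q))⁻¹) * D'
        = Lhalf n q * X * (Lhalf n q)⁻¹
    have hp0' : t^2 * q ≠ 0 := hp0
    have hDL : D * Lhalf n (t^2*q) = (t • Lhalf n q) * D := by
      ext i j
      rw [hD, Matrix.diagonal_mul, Matrix.mul_diagonal]
      simp only [Lhalf, Matrix.of_apply, Matrix.smul_apply, smul_eq_mul, hd]
      split_ifs <;> (first | (exfalso; omega) | ring)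
    have key1 : D * Lhalf n (t^2*q) * D' = t • Lhalf n q := by
      rw [hDL, mul_assoc, hmul, mul_one]
    rw [Lhalf_inv hne _ hp0', Lhalf_inv hne q hq0]
    have assoc1 : D * (Lhalf n (t^2*q) * (D' * X * D) * ((t^2*q)⁻¹ • Lhalf n (t^2*q))) * D'
        = (t^2*q)⁻¹ • ((D * Lhalf n (t^2*q) * D') * X * (D * Lhalf n (t^2*q) * D')) := by
      simp only [Matrix.mul_smul, Matrix.smul_mul]
      congr 1
      noncomm_ring
    rw [assoc1, key1]
    simp only [Matrix.smul_mul, Matrix.mul_smul, smul_smul]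
    congr 1
    rw [show t * t = t ^ 2 by ring, mul_inv, mul_comm (t^2)⁻¹ q⁻¹, mul_assoc,
      inv_mul_cancel₀ (pow_ne_zero 2 ht0), mul_one]
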